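/- Define the WF iterates f_{τ+1} = f_τ − μ̄·G(f_τ) from an arbitrary f_0 ∈ ℂ^N, where μ̄ = 1/L̄ with L̄ = λmax(A^H A) > 0 and G the generalized gradient of the amplitude loss L. Then for every T ≥ 0, Σ_{τ=0}^{T} ‖G(f_τ)‖₂² ≤ L̄·(L(f_0) − inf_{f ∈ ℂ^N} L(f)). -/

import Mathlib

open scoped BigOperators
open Matrix

noncomputable section

namespace AWF

/-- Complex signum: `z/|z|` for `z ≠ 0`, and `0` at `0`. -/
def csgn (z : ℂ) : ℂ := if z = 0 then 0 else z / ((‖z‖ : ℝ) : ℂ)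

variable {M N : ℕ}

/-- Amplitude loss `L(f) = ∑ (b_m − |(Af)_m|)²`. -/
def ampLoss (A : Matrix (Fin M) (Fin N) ℂ) (b : Fin M → ℝ) (f : Fin N → ℂ) : ℝ :=
  ∑ m, (b m - ‖A.mulVec f m‖) ^ 2

/-- Generalized (Wirtinger) gradient `G(f) = Aᴴ(Af − b ⊙ sgn(Af))`. -/
def wGrad (A : Matrix (Fin M) (Fin N) ℂ) (b : Fin M → ℝ) (f : Fin N → ℂ) : Fin N → ℂ :=
  Aᴴ.mulVec (fun m => A.mulVec f m - (b m : ℂ) * csgn (A.mulVec f m))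

/-- Euclidean (ℓ₂) norm of a complex vector. -/
def norm2 {n : ℕ} (v : Fin n → ℂ) : ℝ := Real.sqrt (∑ i, ‖v i‖ ^ 2)

/-- The largest eigenvalue of the positive semidefinite Hermitian matrix `Aᴴ A`. -/
def lamMax (A : Matrix (Fin M) (Fin N) ℂ) : ℝ :=
  ⨆ i, (Matrix.isHermitian_conjTranspose_mul_self A).eigenvalues i

end AWF

namespace AWF

/-! ### Auxiliary lemmas -/

lemma norm_csgn' {z : ℂ} (hz : z ≠ 0) : ‖csgn z‖ = 1 := by
  rw [csgn, if_neg hz]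
  rw [norm_div, Complex.norm_real, Real.norm_eq_abs,
    abs_of_nonneg (norm_nonneg z)]
  field_simp [norm_ne_zero_iff.mpr hz]

lemma norm_res' (bm : ℝ) (ym : ℂ) :
    ‖ym - bm * csgn ym‖ ^ 2 + (if ym = 0 then bm ^ 2 else 0) = (bm - ‖ym‖) ^ 2 := by
  by_cases hz : ym = 0
  · simp [hz, csgn]
  · rw [if_neg hz]
    have ha : (‖ym‖ : ℝ) ≠ 0 := norm_ne_zero_iff.mpr hz
    have key : ym - bm * csgn ym
        = (((‖ym‖ - bm : ℝ) : ℂ) / ((‖ym‖ : ℝ) : ℂ)) * ym := by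
      have ha' : ((‖ym‖ : ℝ) : ℂ) ≠ 0 := by exact_mod_cast ha
      rw [csgn, if_neg hz]
      push_cast
      field_simp [ha']
    rw [key, norm_mul, norm_div, Complex.norm_real, Complex.norm_real,
      Real.norm_eq_abs, Real.norm_eq_abs, abs_of_nonneg (norm_nonneg ym)]
    rw [div_mul_eq_mul_div, mul_div_assoc, div_self ha, mul_one, sq_abs, add_zero]
    ring

lemma major' (bm : ℝ) (hbm : 0 ≤ bm) (ym w : ℂ) :
    (bm - ‖w‖) ^ 2 ≤ ‖w - bm * csgn ym‖ ^ 2 + (if ym = 0 then bm ^ 2 else 0) := by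
  by_cases hz : ym = 0
  · rw [if_pos hz]
    simp only [csgn, if_pos hz, mul_zero, sub_zero]
    have h1 : ‖w‖ = ‖w‖ := rfl
    nlinarith [norm_nonneg w, mul_nonneg hbm (norm_nonneg w)]
  · rw [if_neg hz, add_zero]
    have hbs : ‖(bm : ℂ) * csgn ym‖ = bm := by
      rw [norm_mul, norm_csgn' hz, mul_one, Complex.norm_real, Real.norm_eq_abs,
        abs_of_nonneg hbm]
    have h2 := abs_norm_sub_norm_le w ((bm : ℂ) * csgn ym)
    rw [hbs] at h2
    have h3 : (bm - ‖w‖) ^ 2 = |‖w‖ - bm| ^ 2 := by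
      rw [sq_abs]; ring
    rw [h3]
    exact pow_le_pow_left₀ (abs_nonneg _) h2 2

lemma dot_star_self (K : ℕ) (w : Fin K → ℂ) :
    star w ⬝ᵥ w = ((∑ m, ‖w m‖ ^ 2 : ℝ) : ℂ) := by
  simp only [dotProduct, Pi.star_apply, Complex.ofReal_sum, RCLike.star_def]
  refine Finset.sum_congr rfl fun m _ => ?_
  rw [← Complex.normSq_eq_conj_mul_self, Complex.normSq_eq_norm_sq]

lemma ampLoss_nonneg' {M N : ℕ} (A : Matrix (Fin M) (Fin N) ℂ) (b : Fin M → ℝ)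
    (g : Fin N → ℂ) : 0 ≤ ampLoss A b g := by
  unfold ampLoss; positivity

/-- Rayleigh-type bound: `‖A v‖² ≤ λmax(AᴴA) ‖v‖²`. -/
lemma rayleigh' {M N : ℕ} (A : Matrix (Fin M) (Fin N) ℂ) (v : Fin N → ℂ) :
    ∑ m, ‖A.mulVec v m‖ ^ 2 ≤ lamMax A * ∑ i, ‖v i‖ ^ 2 := by
  have hA := Matrix.isHermitian_conjTranspose_mul_self A
  set e := hA.eigenvectorBasis with he
  set lam := hA.eigenvalues with hlam
  set V : EuclideanSpace ℂ (Fin N) := (WithLp.equiv 2 _).symm v with hV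
  set c : Fin N → ℂ := fun j => e.repr V j with hc
  have hrepr : v = ∑ j, c j • ⇑(e j) := by
    have h := congrArg WithLp.ofLp (e.sum_repr V).symm
    rw [WithLp.ofLp_sum] at h
    simp only [WithLp.ofLp_smul] at h
    exact h
  have hmv : (Aᴴ * A).mulVec v = ∑ j, c j • ((lam j : ℝ) • ⇑(e j)) := by
    conv_lhs => rw [hrepr]
    rw [← Matrix.mulVecLin_apply, map_sum]
    refine Finset.sum_congr rfl fun j _ => ?_
    rw [LinearMap.map_smul, Matrix.mulVecLin_apply, hA.mulVec_eigenvectorBasis]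
  have hcj : ∀ j, c j = ∑ i, (starRingEnd ℂ) (e j i) * v i := by
    intro j
    rw [hc]
    simp only [OrthonormalBasis.repr_apply_apply, PiLp.inner_apply, RCLike.inner_apply]
    exact Finset.sum_congr rfl fun i _ => mul_comm _ _
  have hdot : star v ⬝ᵥ (Aᴴ * A).mulVec v = ∑ j, (lam j : ℂ) * ((‖c j‖ ^ 2 : ℝ) : ℂ) := by
    rw [hmv]
    simp only [dotProduct, Pi.smul_apply, Finset.sum_apply, smul_eq_mul,
      Complex.real_smul, Pi.star_apply, Finset.mul_sum]
    rw [Finset.sum_comm]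
    refine Finset.sum_congr rfl fun j _ => ?_
    have h2 : (starRingEnd ℂ) (c j) = ∑ i, e j i * (starRingEnd ℂ) (v i) := by
      rw [hcj]; rw [map_sum]; simp [mul_comm]
    calc ∑ i, star (v i) * (c j * ((lam j : ℂ) * e j i))
        = (lam j : ℂ) * (c j * ∑ i, e j i * (starRingEnd ℂ) (v i)) := by
          rw [Finset.mul_sum, Finset.mul_sum]
          refine Finset.sum_congr rfl fun i _ => ?_
          simp [RCLike.star_def]; ring
      _ = (lam j : ℂ) * ((‖c j‖ ^ 2 : ℝ) : ℂ) := by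
          rw [← h2, Complex.mul_conj, Complex.normSq_eq_norm_sq]
  have h1 : star v ⬝ᵥ (Aᴴ * A).mulVec v = star (A.mulVec v) ⬝ᵥ A.mulVec v := by
    rw [← Matrix.mulVec_mulVec, Matrix.dotProduct_mulVec, ← Matrix.star_mulVec]
  have hre : ∑ m, ‖A.mulVec v m‖ ^ 2 = ∑ j, lam j * ‖c j‖ ^ 2 := by
    have h2 : ((∑ m, ‖A.mulVec v m‖ ^ 2 : ℝ) : ℂ) = ((∑ j, lam j * ‖c j‖ ^ 2 : ℝ) : ℂ) := by
      rw [← dot_star_self M (A.mulVec v), ← h1, hdot]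
      push_cast
      ring_nf
    exact_mod_cast h2
  have hpars : ∑ j, ‖c j‖ ^ 2 = ∑ i, ‖v i‖ ^ 2 := by
    have h3 : ‖e.repr V‖ = ‖V‖ := e.repr.norm_map V
    have h4 : ‖V‖ ^ 2 = ∑ i, ‖v i‖ ^ 2 := by
      rw [EuclideanSpace.norm_eq, Real.sq_sqrt (by positivity)]
      rfl
    have h5 : ‖e.repr V‖ ^ 2 = ∑ j, ‖c j‖ ^ 2 := by
      rw [EuclideanSpace.norm_eq, Real.sq_sqrt (by positivity)]
    rw [← h5, h3, h4]
  rw [hre, ← hpars, Finset.mul_sum]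
  refine Finset.sum_le_sum fun j _ => ?_
  have hle : lam j ≤ lamMax A :=
    le_ciSup (Set.Finite.bddAbove (Set.finite_range _)) j
  exact mul_le_mul_of_nonneg_right hle (by positivity)

lemma norm_sub_sq_c (u v : ℂ) :
    ‖u - v‖ ^ 2 = ‖u‖ ^ 2 - 2 * ((starRingEnd ℂ) u * v).re + ‖v‖ ^ 2 := by
  have h : ((starRingEnd ℂ) u * v).re = (u * (starRingEnd ℂ) v).re := by
    rw [← Complex.conj_re (u * (starRingEnd ℂ) v)]
    simp [RingHom.map_mul]
  rw [h]
  simp only [Complex.sq_norm]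
  rw [Complex.normSq_sub]
  ring

/-- Descent step: one WF iteration decreases the loss by at least `μ‖G‖²`. -/
lemma descent' {M N : ℕ} (A : Matrix (Fin M) (Fin N) ℂ) (b : Fin M → ℝ) (hb : ∀ m, 0 ≤ b m)
    (hpos : 0 < lamMax A) (g : Fin N → ℂ) :
    ampLoss A b (g - (1 / lamMax A) • wGrad A b g)
      + (1 / lamMax A) * ∑ i, ‖wGrad A b g i‖ ^ 2 ≤ ampLoss A b g := by
  set L := lamMax A with hL
  set μ : ℝ := 1 / L with hμ
  set G := wGrad A b g with hGdef
  set y := A.mulVec g with hy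
  set r : Fin M → ℂ := fun m => y m - (b m : ℂ) * csgn (y m) with hr
  set z : Fin M → ℂ := fun m => (μ : ℂ) * A.mulVec G m with hzdef
  set cEx : ℝ := ∑ m, (if y m = 0 then (b m) ^ 2 else 0) with hcEx
  set S : ℝ := ∑ i, ‖G i‖ ^ 2 with hS
  have hSnn : 0 ≤ S := by rw [hS]; positivity
  have hG : G = Aᴴ.mulVec r := rfl
  -- value of loss at g
  have hLg : ampLoss A b g = (∑ m, ‖r m‖ ^ 2) + cEx := by
    rw [ampLoss, hcEx, ← Finset.sum_add_distrib]
    exact Finset.sum_congr rfl fun m _ => (norm_res' (b m) (y m)).symm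
  -- new point image
  have hy' : A.mulVec (g - μ • G) = fun m => y m - z m := by
    funext m
    rw [Matrix.mulVec_sub, Matrix.mulVec_smul]
    simp [hzdef, Complex.real_smul, hy]
  -- majorization
  have hmaj : ampLoss A b (g - μ • G) ≤ (∑ m, ‖r m - z m‖ ^ 2) + cEx := by
    rw [ampLoss, hcEx, ← Finset.sum_add_distrib]
    refine Finset.sum_le_sum fun m _ => ?_
    have h := major' (b m) (hb m) (y m) (A.mulVec (g - μ • G) m)
    have heq : A.mulVec (g - μ • G) m - (b m : ℂ) * csgn (y m) = r m - z m := by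
      rw [hy']; simp only [hr]; ring
    rwa [heq] at h
  -- inner product identity
  have hadj : star r ⬝ᵥ A.mulVec G = ((S : ℝ) : ℂ) := by
    rw [Matrix.dotProduct_mulVec]
    have hstG : star G = Matrix.vecMul (star r) A := by
      rw [hG, Matrix.star_mulVec, Matrix.conjTranspose_conjTranspose]
    rw [← hstG, dot_star_self, hS]
  -- expansion of the sum of squares
  have hexp : (∑ m, ‖r m - z m‖ ^ 2)
      = (∑ m, ‖r m‖ ^ 2) - 2 * (μ * S) + ∑ m, ‖z m‖ ^ 2 := by
    have h6 : ∑ m, ‖r m - z m‖ ^ 2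
        = ∑ m, (‖r m‖ ^ 2 - 2 * ((starRingEnd ℂ) (r m) * z m).re + ‖z m‖ ^ 2) :=
      Finset.sum_congr rfl fun m _ => norm_sub_sq_c (r m) (z m)
    have h7 : ∑ m, ((starRingEnd ℂ) (r m) * z m).re = μ * S := by
      have h8 : (∑ m, (starRingEnd ℂ) (r m) * z m) = ((μ * S : ℝ) : ℂ) := by
        have : (∑ m, (starRingEnd ℂ) (r m) * z m) = (μ : ℂ) * (star r ⬝ᵥ A.mulVec G) := by
          rw [dotProduct, Finset.mul_sum]
          exact Finset.sum_congr rfl fun m _ => by simp [hzdef, RCLike.star_def]; ring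
        rw [this, hadj]
        push_cast
        ring
      calc ∑ m, ((starRingEnd ℂ) (r m) * z m).re
          = (∑ m, (starRingEnd ℂ) (r m) * z m).re := by rw [Complex.re_sum]
        _ = μ * S := by rw [h8, Complex.ofReal_re]
    rw [h6, Finset.sum_add_distrib, Finset.sum_sub_distrib, ← Finset.mul_sum, h7]
  -- bound on the quadratic term
  have hzbd : ∑ m, ‖z m‖ ^ 2 ≤ μ ^ 2 * (L * S) := by
    have h9 : ∑ m, ‖z m‖ ^ 2 = μ ^ 2 * ∑ m, ‖A.mulVec G m‖ ^ 2 := by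
      rw [Finset.mul_sum]
      refine Finset.sum_congr rfl fun m _ => ?_
      rw [hzdef]
      rw [norm_mul, mul_pow, Complex.norm_real, Real.norm_eq_abs, sq_abs]
    rw [h9]
    have h10 := rayleigh' A G
    have : μ ^ 2 * ∑ m, ‖A.mulVec G m‖ ^ 2 ≤ μ ^ 2 * (lamMax A * ∑ i, ‖G i‖ ^ 2) :=
      mul_le_mul_of_nonneg_left h10 (by positivity)
    simpa [hL, hS] using this
  -- combine
  have hμL : μ ^ 2 * L = μ := by
    rw [hμ]; field_simp
  have hfin : ampLoss A b (g - μ • G) ≤ ampLoss A b g - μ * S := by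
    have := hmaj
    rw [hexp] at this
    have h11 : μ ^ 2 * (L * S) = μ * S := by rw [← mul_assoc, hμL]
    nlinarith [hzbd]
  linarith [hfin]

/-- For WF iterates `f_{τ+1} = f_τ − μ̄ G(f_τ)` with `μ̄ = 1/L̄`,
`L̄ = λmax(AᴴA) > 0`: `∑_{τ=0}^T ‖G(f_τ)‖₂² ≤ L̄ (L(f_0) − inf L)`. -/
theorem wf_sum_grad_bound
    {M N : ℕ} (A : Matrix (Fin M) (Fin N) ℂ) (b : Fin M → ℝ) (hb : ∀ m, 0 ≤ b m)
    (hpos : 0 < lamMax A)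
    (f : ℕ → Fin N → ℂ)
    (hiter : ∀ τ, f (τ + 1) = f τ - (1 / lamMax A) • wGrad A b (f τ))
    (T : ℕ) :
    ∑ τ ∈ Finset.range (T + 1), norm2 (wGrad A b (f τ)) ^ 2
      ≤ lamMax A * (ampLoss A b (f 0) - ⨅ g : Fin N → ℂ, ampLoss A b g) := by
  set L := lamMax A with hL
  have hstep : ∀ τ, norm2 (wGrad A b (f τ)) ^ 2
      ≤ L * (ampLoss A b (f τ) - ampLoss A b (f (τ + 1))) := by
    intro τ
    have hd := descent' A b hb hpos (f τ)
    rw [← hiter τ] at hd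
    have hn2 : norm2 (wGrad A b (f τ)) ^ 2 = ∑ i, ‖wGrad A b (f τ) i‖ ^ 2 := by
      rw [norm2, Real.sq_sqrt (by positivity)]
    rw [hn2]
    calc ∑ i, ‖wGrad A b (f τ) i‖ ^ 2
        = L * ((1 / L) * ∑ i, ‖wGrad A b (f τ) i‖ ^ 2) := by
          field_simp
      _ ≤ L * (ampLoss A b (f τ) - ampLoss A b (f (τ + 1))) :=
          mul_le_mul_of_nonneg_left (by linarith) hpos.le
  calc ∑ τ ∈ Finset.range (T + 1), norm2 (wGrad A b (f τ)) ^ 2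
      ≤ ∑ τ ∈ Finset.range (T + 1), L * (ampLoss A b (f τ) - ampLoss A b (f (τ + 1))) :=
        Finset.sum_le_sum fun τ _ => hstep τ
    _ = L * (ampLoss A b (f 0) - ampLoss A b (f (T + 1))) := by
        rw [← Finset.mul_sum, Finset.sum_range_sub' (fun τ => ampLoss A b (f τ))]
    _ ≤ L * (ampLoss A b (f 0) - ⨅ g : Fin N → ℂ, ampLoss A b g) := by
        refine mul_le_mul_of_nonneg_left ?_ hpos.le
        have hbdd : BddBelow (Set.range fun g : Fin N → ℂ => ampLoss A b g) :=
          ⟨0, by rintro x ⟨g, rfl⟩; exact ampLoss_nonneg' A b g⟩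
        have h := ciInf_le hbdd (f (T + 1))
        linarith

end AWF
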